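/- If Y ~ ESN_k(ξ, Ω, α, τ) with density f(y) = φ_k(y − ξ; Ω)·Φ(α₀ + αᵀω⁻¹(y−ξ))/Φ(τ), where ω = diag(Ω)^{1/2} and α₀ = τ√(1+αᵀΩ̄α) with Ω̄ = ω⁻¹Ωω⁻¹, then the cumulant generating function of Y is K(t) = ξᵀt + ½ tᵀΩt + log Φ(τ + δᵀωt) − log Φ(τ), where δ = Ω̄α/√(1+αᵀΩ̄α). -/

import Mathlib

open Matrix MeasureTheory Real

noncomputable def phi (x : ℝ) : ℝ := (Real.sqrt (2 * Real.pi))⁻¹ * Real.exp (-x ^ 2 / 2)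

noncomputable def Phi (x : ℝ) : ℝ := ∫ t in Set.Iic x, phi t

/-- Density of `N_k(0, Ω)`. -/
noncomputable def gaussPdf {k : ℕ} (Ω : Matrix (Fin k) (Fin k) ℝ) (z : Fin k → ℝ) : ℝ :=
  (2 * Real.pi) ^ (-(k : ℝ) / 2) * Ω.det ^ (-(1 : ℝ) / 2) *
    Real.exp (-(1 / 2) * (z ⬝ᵥ Ω⁻¹ *ᵥ z))

/-- Density of `ESN_k(ξ, Ω, α, τ)`. -/
noncomputable def esnPdfFull {k : ℕ} (ξ : Fin k → ℝ) (Ω : Matrix (Fin k) (Fin k) ℝ)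
    (α : Fin k → ℝ) (τ : ℝ) (y : Fin k → ℝ) : ℝ :=
  let ω : Matrix (Fin k) (Fin k) ℝ := Matrix.diagonal fun i => Real.sqrt (Ω i i)
  let Ωb : Matrix (Fin k) (Fin k) ℝ := ω⁻¹ * Ω * ω⁻¹
  gaussPdf Ω (y - ξ) *
    Phi (τ * Real.sqrt (1 + α ⬝ᵥ Ωb *ᵥ α) + α ⬝ᵥ (ω⁻¹ *ᵥ (y - ξ))) / Phi τ

lemma phi_eq_gaussian : phi = ProbabilityTheory.gaussianPDFReal 0 1 := by
  ext x
  simp [phi, ProbabilityTheory.gaussianPDFReal]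

lemma phi_pos (x : ℝ) : 0 < phi x := by
  rw [phi_eq_gaussian]; exact ProbabilityTheory.gaussianPDFReal_pos _ _ _ one_ne_zero

lemma phi_nonneg (x : ℝ) : 0 ≤ phi x := (phi_pos x).le

lemma integrable_phi : Integrable phi := by
  rw [phi_eq_gaussian]; exact ProbabilityTheory.integrable_gaussianPDFReal 0 1

lemma integral_phi : ∫ x, phi x = 1 := by
  rw [phi_eq_gaussian]; exact ProbabilityTheory.integral_gaussianPDFReal_eq_one 0 one_ne_zero

lemma continuous_phi : Continuous phi := by
  unfold phi; fun_prop

lemma Phi_mono : Monotone Phi := by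
  intro a b hab
  exact setIntegral_mono_set integrable_phi.integrableOn
    (Filter.Eventually.of_forall fun x => phi_nonneg x)
    (HasSubset.Subset.eventuallyLE (Set.Iic_subset_Iic.2 hab))

lemma measurable_Phi : Measurable Phi := Phi_mono.measurable

lemma Phi_nonneg (x : ℝ) : 0 ≤ Phi x :=
  setIntegral_nonneg measurableSet_Iic fun t _ => phi_nonneg t

lemma Phi_pos (x : ℝ) : 0 < Phi x := by
  rw [Phi, setIntegral_pos_iff_support_of_nonneg_ae
    (Filter.Eventually.of_forall fun t => phi_nonneg t) integrable_phi.integrableOn]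
  have : Function.support phi = Set.univ := by
    ext t; simp [Function.support, (phi_pos t).ne']
  rw [this, Set.univ_inter]
  simp [Real.volume_Iic]

lemma Phi_le_one (x : ℝ) : Phi x ≤ 1 := by
  rw [Phi, ← integral_phi]
  exact setIntegral_le_integral integrable_phi
    (Filter.Eventually.of_forall fun t => phi_nonneg t)

lemma integral_comp_mulVec {n : ℕ} (M : Matrix (Fin n) (Fin n) ℝ) (h : M.det ≠ 0)
    (f : (Fin n → ℝ) → ℝ) :
    ∫ x, f (M *ᵥ x) = |M.det|⁻¹ * ∫ x, f x := by
  have hmap : Measure.map (Matrix.toLin' M) volume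
      = ENNReal.ofReal |M.det⁻¹| • volume :=
    Real.map_matrix_volume_pi_eq_smul_volume_pi h
  have hcont : Continuous (Matrix.toLin' M) := LinearMap.continuous_of_finiteDimensional _
  have hinj : Function.Injective (Matrix.toLin' M) := by
    have : Function.Injective (M.mulVec) :=
      Matrix.mulVec_injective_iff_isUnit.2 ((Matrix.isUnit_iff_isUnit_det M).2 (isUnit_iff_ne_zero.2 h))
    exact this
  have hemb : MeasurableEmbedding (Matrix.toLin' M) := hcont.measurableEmbedding hinj
  calc ∫ x, f (M *ᵥ x) = ∫ x, f ((Matrix.toLin' M) x) := by simp [Matrix.toLin'_apply]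
    _ = ∫ y, f y ∂(Measure.map (Matrix.toLin' M) volume) := (hemb.integral_map f).symm
    _ = |M.det|⁻¹ * ∫ x, f x := by
        rw [hmap, integral_smul_measure, ENNReal.toReal_ofReal (abs_nonneg _), smul_eq_mul,
          abs_inv]

lemma phi_mul_phi_of_sq {a b a' b' : ℝ} (h : a ^ 2 + b ^ 2 = a' ^ 2 + b' ^ 2) :
    phi a * phi b = phi a' * phi b' := by
  simp only [phi]
  rw [mul_mul_mul_comm, ← Real.exp_add, mul_mul_mul_comm (Real.sqrt (2 * Real.pi))⁻¹,
    ← Real.exp_add, show -a ^ 2 / 2 + -b ^ 2 / 2 = -a' ^ 2 / 2 + -b' ^ 2 / 2 by linarith]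

lemma indicator_prod_integral (c v : ℝ) :
    ∫ p : ℝ × ℝ, Set.indicator {q : ℝ × ℝ | q.2 ≤ c + v * q.1}
      (fun q => phi q.1 * phi q.2) p = ∫ x, phi x * Phi (c + v * x) := by
  have hs : MeasurableSet {q : ℝ × ℝ | q.2 ≤ c + v * q.1} :=
    measurableSet_le (by fun_prop) (by fun_prop)
  have hint : Integrable (fun q : ℝ × ℝ => phi q.1 * phi q.2)
      ((volume : Measure ℝ).prod volume) := integrable_phi.mul_prod integrable_phi
  have hgint : Integrable
      (Set.indicator {q : ℝ × ℝ | q.2 ≤ c + v * q.1} (fun q => phi q.1 * phi q.2))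
      ((volume : Measure ℝ).prod volume) := hint.indicator hs
  rw [Measure.volume_eq_prod, integral_prod _ hgint]
  refine integral_congr_ae (Filter.Eventually.of_forall fun x => ?_)
  have : ∀ w : ℝ, Set.indicator {q : ℝ × ℝ | q.2 ≤ c + v * q.1}
      (fun q => phi q.1 * phi q.2) (x, w)
      = Set.indicator (Set.Iic (c + v * x)) (fun w => phi x * phi w) w := by
    intro w
    by_cases h : w ≤ c + v * x
    · rw [Set.indicator_of_mem (by exact h) _, Set.indicator_of_mem (by exact h)]
    · rw [Set.indicator_of_notMem (by exact h) _, Set.indicator_of_notMem (by exact h)]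
  simp_rw [this]
  rw [integral_indicator measurableSet_Iic, MeasureTheory.integral_const_mul]
  rfl

lemma integral_phi_mul_Phi (c v : ℝ) :
    ∫ x, phi x * Phi (c + v * x) = Phi (c / Real.sqrt (1 + v ^ 2)) := by
  set r := Real.sqrt (1 + v ^ 2) with hrdef
  have hr2 : r ^ 2 = 1 + v ^ 2 := Real.sq_sqrt (by positivity)
  have hrpos : 0 < r := Real.sqrt_pos.2 (by positivity)
  have hrne : r ≠ 0 := hrpos.ne'
  set M : Matrix (Fin 2) (Fin 2) ℝ := !![1/r, -v/r; v/r, 1/r] with hM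
  have hdet : M.det = 1 := by
    simp only [hM, Matrix.det_fin_two_of]
    field_simp
    linarith [hr2]
  have hfin : ∀ y : Fin 2 → ℝ, (MeasurableEquiv.finTwoArrow y : ℝ × ℝ) = (y 0, y 1) :=
    fun y => rfl
  have key : ∀ x : Fin 2 → ℝ,
      Set.indicator {q : ℝ × ℝ | q.2 ≤ c + v * q.1} (fun q => phi q.1 * phi q.2)
        (MeasurableEquiv.finTwoArrow (M *ᵥ x))
      = Set.indicator {q : ℝ × ℝ | q.2 ≤ c / r + 0 * q.1} (fun q => phi q.1 * phi q.2)
        (MeasurableEquiv.finTwoArrow x) := by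
    intro x
    have hm0 : (M *ᵥ x) 0 = x 0 / r - v * x 1 / r := by
      simp [hM, Matrix.mulVec, dotProduct, Fin.sum_univ_two]
      ring
    have hm1 : (M *ᵥ x) 1 = v * x 0 / r + x 1 / r := by
      simp [hM, Matrix.mulVec, dotProduct, Fin.sum_univ_two]
      ring
    have e1 : c + v * (x 0 / r - v * x 1 / r) - (v * x 0 / r + x 1 / r) = c - x 1 * r := by
      field_simp
      first | linear_combination x 1 * hr2 | ring
    have hcond : ((M *ᵥ x) 1 ≤ c + v * ((M *ᵥ x) 0)) ↔ (x 1 ≤ c / r + 0 * x 0) := by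
      rw [hm0, hm1, zero_mul, add_zero, ← sub_nonneg, e1, ← sub_nonneg (a := c / r),
        show c / r - x 1 = (c - x 1 * r) / r by field_simp; try ring, le_div_iff₀ hrpos, zero_mul]
    have hval : phi ((M *ᵥ x) 0) * phi ((M *ᵥ x) 1) = phi (x 0) * phi (x 1) := by
      refine phi_mul_phi_of_sq ?_
      rw [hm0, hm1]
      field_simp
      first | linear_combination (-x 0 ^ 2 - x 1 ^ 2) * hr2 | ring
    rw [hfin, hfin, Set.indicator_apply, Set.indicator_apply]
    simp only [Set.mem_setOf_eq]
    rw [if_congr hcond hval rfl]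
  calc ∫ x, phi x * Phi (c + v * x)
      = ∫ p : ℝ × ℝ, Set.indicator {q : ℝ × ℝ | q.2 ≤ c + v * q.1}
          (fun q => phi q.1 * phi q.2) p := (indicator_prod_integral c v).symm
    _ = ∫ x : Fin 2 → ℝ, Set.indicator {q : ℝ × ℝ | q.2 ≤ c + v * q.1}
          (fun q => phi q.1 * phi q.2) (MeasurableEquiv.finTwoArrow x) :=
        ((volume_preserving_finTwoArrow ℝ).integral_comp
          (MeasurableEquiv.measurableEmbedding _) _).symm
    _ = ∫ x : Fin 2 → ℝ, Set.indicator {q : ℝ × ℝ | q.2 ≤ c + v * q.1}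
          (fun q => phi q.1 * phi q.2) (MeasurableEquiv.finTwoArrow (M *ᵥ x)) := by
        have hcv := integral_comp_mulVec M (by rw [hdet]; norm_num)
          (fun y => Set.indicator {q : ℝ × ℝ | q.2 ≤ c + v * q.1}
            (fun q => phi q.1 * phi q.2) (MeasurableEquiv.finTwoArrow y))
        rw [hdet] at hcv
        simp only [abs_one, inv_one, one_mul] at hcv
        exact hcv.symm
    _ = ∫ x : Fin 2 → ℝ, Set.indicator {q : ℝ × ℝ | q.2 ≤ c / r + 0 * q.1}
          (fun q => phi q.1 * phi q.2) (MeasurableEquiv.finTwoArrow x) := by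
        simp_rw [key]
    _ = ∫ p : ℝ × ℝ, Set.indicator {q : ℝ × ℝ | q.2 ≤ c / r + 0 * q.1}
          (fun q => phi q.1 * phi q.2) p :=
        (volume_preserving_finTwoArrow ℝ).integral_comp
          (MeasurableEquiv.measurableEmbedding _) _
    _ = ∫ x, phi x * Phi (c / r + 0 * x) := indicator_prod_integral (c / r) 0
    _ = Phi (c / r) := by
        simp_rw [zero_mul, add_zero]
        rw [integral_mul_const, integral_phi, one_mul]

lemma integral_pi_phi_mul_Phi (n : ℕ) (c : ℝ) (v : Fin n → ℝ) :
    ∫ x : Fin n → ℝ, (∏ i, phi (x i)) * Phi (c + v ⬝ᵥ x)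
      = Phi (c / Real.sqrt (1 + v ⬝ᵥ v)) := by
  induction n generalizing c with
  | zero =>
    have h1 : (volume : Measure (Fin 0 → ℝ)) Set.univ = 1 := by
      simp [volume_pi]
    simp only [Finset.univ_eq_empty, Finset.prod_empty, dotProduct, Finset.sum_empty,
      one_mul, add_zero, integral_const, h1]
    simp [Measure.real, h1]
  | succ n ih =>
    set w : Fin n → ℝ := fun j => v j.succ with hw
    set s : ℝ := Real.sqrt (1 + w ⬝ᵥ w) with hs
    have hwnn : 0 ≤ w ⬝ᵥ w := Finset.sum_nonneg fun i _ => mul_self_nonneg _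
    have hs2 : s ^ 2 = 1 + w ⬝ᵥ w := Real.sq_sqrt (by positivity)
    have hspos : 0 < s := Real.sqrt_pos.2 (by positivity)
    have hsne : s ≠ 0 := hspos.ne'
    have hmp := (measurePreserving_piFinSuccAbove
      (fun _ : Fin (n + 1) => (volume : Measure ℝ)) 0).symm
    have step1 : ∫ x : Fin (n + 1) → ℝ, (∏ i, phi (x i)) * Phi (c + v ⬝ᵥ x)
        = ∫ p : ℝ × (Fin n → ℝ), (phi p.1 * ∏ j, phi (p.2 j))
            * Phi (c + (v 0 * p.1 + w ⬝ᵥ p.2))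
            ∂((volume : Measure ℝ).prod (Measure.pi fun _ => volume)) := by
      rw [volume_pi, ← hmp.integral_comp (MeasurableEquiv.measurableEmbedding _)
        (fun x => (∏ i, phi (x i)) * Phi (c + v ⬝ᵥ x))]
      refine integral_congr_ae (Filter.Eventually.of_forall fun p => ?_)
      simp only [MeasurableEquiv.piFinSuccAbove_symm_apply, Fin.insertNthEquiv,
        Equiv.coe_fn_mk, Fin.insertNth_zero, Fin.zero_succAbove, Fin.cons_zero, Fin.cons_succ,
        cast_eq]
      rw [Fin.prod_univ_succ]
      simp only [Fin.cons_zero, Fin.cons_succ]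
      rw [show v ⬝ᵥ Fin.cons p.1 p.2 = v 0 * p.1 + w ⬝ᵥ p.2 from by
        simp [dotProduct, Fin.sum_univ_succ, hw]]
    have hm1 : Measurable fun p : ℝ × (Fin n → ℝ) => c + (v 0 * p.1 + w ⬝ᵥ p.2) := by
      apply Measurable.const_add
      apply Measurable.add
      · exact measurable_fst.const_mul _
      · simp only [dotProduct]
        exact Finset.measurable_sum _ fun j _ =>
          by fun_prop
    have hbmeas : Measurable fun p : ℝ × (Fin n → ℝ) => phi p.1 * ∏ j, phi (p.2 j) :=
      (continuous_phi.measurable.comp measurable_fst).mul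
        (Finset.measurable_prod _ fun j _ =>
          continuous_phi.measurable.comp ((measurable_pi_apply j).comp measurable_snd))
    have hbound : Integrable (fun p : ℝ × (Fin n → ℝ) => phi p.1 * ∏ j, phi (p.2 j))
        ((volume : Measure ℝ).prod (Measure.pi fun _ => volume)) := by
      have h2 : Integrable (fun y : Fin n → ℝ => ∏ j, phi (y j)) :=
        Integrable.fin_nat_prod fun _ => integrable_phi
      exact integrable_phi.mul_prod h2
    have hGint : Integrable (fun p : ℝ × (Fin n → ℝ) =>
        (phi p.1 * ∏ j, phi (p.2 j)) * Phi (c + (v 0 * p.1 + w ⬝ᵥ p.2)))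
        ((volume : Measure ℝ).prod (Measure.pi fun _ => volume)) := by
      refine hbound.mono ((hbmeas.mul (measurable_Phi.comp hm1)).aestronglyMeasurable)
        (Filter.Eventually.of_forall fun p => ?_)
      have hb : 0 ≤ phi p.1 * ∏ j, phi (p.2 j) :=
        mul_nonneg (phi_nonneg _) (Finset.prod_nonneg fun j _ => phi_nonneg _)
      have h2 : 0 ≤ Phi (c + (v 0 * p.1 + w ⬝ᵥ p.2)) := Phi_nonneg _
      rw [Real.norm_eq_abs, Real.norm_eq_abs, abs_of_nonneg (mul_nonneg hb h2),
        abs_of_nonneg hb]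
      exact mul_le_of_le_one_right hb (Phi_le_one _)
    rw [step1, integral_prod _ hGint]
    have inner : ∀ a : ℝ, (∫ y : Fin n → ℝ, (phi a * ∏ j, phi (y j))
        * Phi (c + (v 0 * a + w ⬝ᵥ y)) ∂(Measure.pi fun _ => volume))
        = phi a * Phi (c / s + (v 0 / s) * a) := by
      intro a
      rw [← volume_pi]
      simp_rw [mul_assoc, ← add_assoc]
      rw [MeasureTheory.integral_const_mul, ih (c + v 0 * a) w, ← hs]
      congr 1
      rw [add_div]
      ring
    simp_rw [inner]
    rw [integral_phi_mul_Phi (c / s) (v 0 / s)]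
    congr 1
    have hvv : v ⬝ᵥ v = v 0 * v 0 + w ⬝ᵥ w := by
      simp [dotProduct, Fin.sum_univ_succ, hw]
    have h1 : 1 + (v 0 / s) ^ 2 = (1 + v ⬝ᵥ v) / s ^ 2 := by
      rw [hvv]
      field_simp
      first | linear_combination hs2 | linear_combination -hs2 | ring
    rw [h1, Real.sqrt_div' _ (by positivity), Real.sqrt_sq hspos.le]
    field_simp

lemma prod_phi_eq {n : ℕ} (x : Fin n → ℝ) :
    (∏ i, phi (x i)) = (2 * Real.pi) ^ (-(n : ℝ) / 2) * Real.exp (-(1 / 2) * (x ⬝ᵥ x)) := by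
  have h2π : (0:ℝ) < 2 * Real.pi := by positivity
  simp only [phi]
  rw [Finset.prod_mul_distrib, Finset.prod_const, ← Real.exp_sum, Finset.card_univ,
    Fintype.card_fin]
  congr 1
  · rw [inv_pow, Real.sqrt_eq_rpow, ← Real.rpow_natCast ((2 * Real.pi) ^ ((1:ℝ)/2)) n,
      ← Real.rpow_mul h2π.le, ← Real.rpow_neg h2π.le]
    norm_num
    ring_nf
  · rw [dotProduct, Finset.mul_sum]
    congr 1
    refine Finset.sum_congr rfl fun i _ => by ring

lemma dot_mulVec_left {n : ℕ} (M : Matrix (Fin n) (Fin n) ℝ) (x y : Fin n → ℝ) :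
    (M *ᵥ x) ⬝ᵥ y = x ⬝ᵥ (Mᵀ *ᵥ y) := by
  rw [Matrix.dotProduct_mulVec, Matrix.vecMul_transpose]

theorem esn_cgf {k : ℕ} (ξ : Fin k → ℝ) (Ω : Matrix (Fin k) (Fin k) ℝ) (hΩ : Ω.PosDef)
    (α : Fin k → ℝ) (τ : ℝ)
    (ω : Matrix (Fin k) (Fin k) ℝ) (hω : ω = Matrix.diagonal fun i => Real.sqrt (Ω i i))
    (Ωb : Matrix (Fin k) (Fin k) ℝ) (hΩb : Ωb = ω⁻¹ * Ω * ω⁻¹)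
    (δ : Fin k → ℝ) (hδ : δ = (Real.sqrt (1 + α ⬝ᵥ Ωb *ᵥ α))⁻¹ • (Ωb *ᵥ α)) (t : Fin k → ℝ) :
    Real.log (∫ y : Fin k → ℝ, Real.exp (t ⬝ᵥ y) * esnPdfFull ξ Ω α τ y) =
      ξ ⬝ᵥ t + (1 / 2) * (t ⬝ᵥ Ω *ᵥ t) + Real.log (Phi (τ + δ ⬝ᵥ ω *ᵥ t)) -
        Real.log (Phi τ) := by
  -- determinant and diagonal facts
  have hdΩ : (0:ℝ) < Ω.det := hΩ.det_pos
  have hΩt : Ωᵀ = Ω := by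
    have := hΩ.1
    rwa [Matrix.IsHermitian, Matrix.conjTranspose_eq_transpose_of_trivial] at this
  have hdiag : ∀ i, 0 < Ω i i := by
    intro i
    exact hΩ.diag_pos
  -- ω facts
  have hωinv : ω⁻¹ = Matrix.diagonal fun i => (Real.sqrt (Ω i i))⁻¹ := by
    refine Matrix.inv_eq_right_inv ?_
    rw [hω, Matrix.diagonal_mul_diagonal,
      show (fun i => Real.sqrt (Ω i i) * (Real.sqrt (Ω i i))⁻¹) = fun _ => (1:ℝ) from
        funext fun i => mul_inv_cancel₀ (Real.sqrt_pos.2 (hdiag i)).ne', Matrix.diagonal_one]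
  have hωt : ωᵀ = ω := by rw [hω, Matrix.diagonal_transpose]
  have hωinvt : (ω⁻¹)ᵀ = ω⁻¹ := by rw [hωinv, Matrix.diagonal_transpose]
  have hsqrtne : ∀ i, Real.sqrt (Ω i i) ≠ 0 := fun i => (Real.sqrt_pos.2 (hdiag i)).ne'
  have hωmul : ω⁻¹ * ω = 1 := by
    rw [hωinv, hω, Matrix.diagonal_mul_diagonal]
    rw [show (fun i => (Real.sqrt (Ω i i))⁻¹ * Real.sqrt (Ω i i)) = fun _ => (1:ℝ) from
      funext fun i => inv_mul_cancel₀ (hsqrtne i), Matrix.diagonal_one]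
  -- square root of Ω
  open scoped MatrixOrder in set C := CFC.sqrt Ω with hCdef
  open scoped MatrixOrder in have hCC : C * C = Ω := CFC.sqrt_mul_sqrt_self Ω hΩ.posSemidef.nonneg
  have hCt : Cᵀ = C := by
    open scoped MatrixOrder in have := (CFC.sqrt_nonneg Ω).posSemidef.1
    rwa [Matrix.IsHermitian, Matrix.conjTranspose_eq_transpose_of_trivial] at this
  have hdetC2 : C.det * C.det = Ω.det := by rw [← Matrix.det_mul, hCC]
  have hdetCne : C.det ≠ 0 := by
    intro h
    rw [h, mul_zero] at hdetC2
    exact hdΩ.ne' hdetC2.symm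
  have habs : |C.det| = Real.sqrt Ω.det := by
    rw [← hdetC2, Real.sqrt_mul_self_eq_abs]
  have hCu : IsUnit C.det := isUnit_iff_ne_zero.2 hdetCne
  -- key matrix identities
  set s : Fin k → ℝ := C *ᵥ t with hsdef
  set vv : Fin k → ℝ := C *ᵥ (ω⁻¹ *ᵥ α) with hvvdef
  have id1 : ∀ x, t ⬝ᵥ (C *ᵥ x) = s ⬝ᵥ x := by
    intro x
    rw [hsdef, dot_mulVec_left, hCt]
  have hkey : C * Ω⁻¹ * C = 1 := by
    rw [← hCC, Matrix.mul_inv_rev, ← Matrix.mul_assoc, Matrix.mul_nonsing_inv _ hCu, one_mul,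
      Matrix.nonsing_inv_mul _ hCu]
  have id2 : ∀ x, (C *ᵥ x) ⬝ᵥ (Ω⁻¹ *ᵥ (C *ᵥ x)) = x ⬝ᵥ x := by
    intro x
    calc (C *ᵥ x) ⬝ᵥ (Ω⁻¹ *ᵥ (C *ᵥ x))
        = x ⬝ᵥ (Cᵀ *ᵥ (Ω⁻¹ *ᵥ (C *ᵥ x))) := dot_mulVec_left C x _
      _ = x ⬝ᵥ ((C * Ω⁻¹ * C) *ᵥ x) := by
          rw [hCt, Matrix.mulVec_mulVec, Matrix.mulVec_mulVec]
      _ = x ⬝ᵥ x := by rw [hkey, Matrix.one_mulVec]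
  have id3 : ∀ x, α ⬝ᵥ (ω⁻¹ *ᵥ (C *ᵥ x)) = vv ⬝ᵥ x := by
    intro x
    rw [hvvdef, dot_mulVec_left, hCt, dot_mulVec_left, hωinvt]
  have id4 : α ⬝ᵥ (Ωb *ᵥ α) = vv ⬝ᵥ vv := by
    rw [← id3 vv]
    rw [hvvdef, Matrix.mulVec_mulVec, Matrix.mulVec_mulVec, Matrix.mulVec_mulVec,
      Matrix.mul_assoc ω⁻¹ C C, hCC, hΩb]
  have id5 : vv ⬝ᵥ s = α ⬝ᵥ ((ω⁻¹ * Ω) *ᵥ t) := by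
    rw [← id3 s, hsdef, Matrix.mulVec_mulVec, Matrix.mulVec_mulVec,
      Matrix.mul_assoc ω⁻¹ C C, hCC]
  have id7 : s ⬝ᵥ s = t ⬝ᵥ (Ω *ᵥ t) := by
    calc s ⬝ᵥ s = (C *ᵥ t) ⬝ᵥ s := by rw [hsdef]
      _ = t ⬝ᵥ (Cᵀ *ᵥ s) := dot_mulVec_left C t s
      _ = t ⬝ᵥ (Ω *ᵥ t) := by rw [hCt, hsdef, Matrix.mulVec_mulVec, hCC]
  have hΩbt : Ωbᵀ = Ωb := by
    rw [hΩb, Matrix.transpose_mul, Matrix.transpose_mul, hΩt, hωinvt, Matrix.mul_assoc]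
  have id6 : δ ⬝ᵥ (ω *ᵥ t)
      = (Real.sqrt (1 + α ⬝ᵥ Ωb *ᵥ α))⁻¹ * (α ⬝ᵥ ((ω⁻¹ * Ω) *ᵥ t)) := by
    rw [hδ, smul_dotProduct, smul_eq_mul]
    congr 1
    rw [dot_mulVec_left, hΩbt, Matrix.mulVec_mulVec, hΩb,
      Matrix.mul_assoc (ω⁻¹ * Ω) ω⁻¹ ω, hωmul, Matrix.mul_one]
  -- scalars
  have hvvnn : 0 ≤ vv ⬝ᵥ vv := Finset.sum_nonneg fun i _ => mul_self_nonneg _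
  have hαΩbα : 0 ≤ α ⬝ᵥ Ωb *ᵥ α := id4 ▸ hvvnn
  have hrpos : 0 < Real.sqrt (1 + α ⬝ᵥ Ωb *ᵥ α) := Real.sqrt_pos.2 (by linarith)
  set a0 : ℝ := τ * Real.sqrt (1 + α ⬝ᵥ Ωb *ᵥ α) with ha0
  set c' : ℝ := a0 + vv ⬝ᵥ s with hc'
  set G : (Fin k → ℝ) → ℝ :=
    fun z => Real.exp (t ⬝ᵥ z) * gaussPdf Ω z * Phi (a0 + α ⬝ᵥ (ω⁻¹ *ᵥ z)) with hG
  have hpoint : ∀ x, G (C *ᵥ x)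
      = Ω.det ^ (-(1:ℝ)/2) * Real.exp ((1/2) * (s ⬝ᵥ s))
        * ((∏ i, phi ((x - s) i)) * Phi (c' + vv ⬝ᵥ (x - s))) := by
    intro x
    have hdot : (x - s) ⬝ᵥ (x - s) = x ⬝ᵥ x - 2 * (s ⬝ᵥ x) + s ⬝ᵥ s := by
      rw [sub_dotProduct, dotProduct_sub, dotProduct_sub,
        dotProduct_comm x s]
      ring
    have hexp : Real.exp (s ⬝ᵥ x) * Real.exp (-(1/2) * (x ⬝ᵥ x))
        = Real.exp ((1/2) * (s ⬝ᵥ s)) * Real.exp (-(1/2) * ((x - s) ⬝ᵥ (x - s))) := by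
      rw [← Real.exp_add, ← Real.exp_add]
      congr 1
      rw [hdot]
      ring
    have hphiarg : c' + vv ⬝ᵥ (x - s) = a0 + vv ⬝ᵥ x := by
      rw [hc', dotProduct_sub]
      ring
    rw [hG]
    simp only
    rw [gaussPdf, id1 x, id2 x, id3 x, prod_phi_eq (x - s), hphiarg]
    linear_combination ((2 * Real.pi) ^ (-(k : ℝ)/2) * Ω.det ^ (-(1:ℝ)/2)
      * Phi (a0 + vv ⬝ᵥ x)) * hexp
  have hconst : |C.det| * Ω.det ^ (-(1:ℝ)/2) = 1 := by
    rw [habs, show (-(1:ℝ)/2) = -(1/2) by norm_num, Real.rpow_neg hdΩ.le,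
      show ((1:ℝ)/2) = 1/2 by norm_num, ← Real.sqrt_eq_rpow]
    exact mul_inv_cancel₀ (Real.sqrt_pos.2 hdΩ).ne'
  have harg : c' / Real.sqrt (1 + vv ⬝ᵥ vv) = τ + δ ⬝ᵥ (ω *ᵥ t) := by
    rw [← id4, hc', ha0, id5, id6]
    field_simp
  have hunfold : ∀ y, Real.exp (t ⬝ᵥ y) * esnPdfFull ξ Ω α τ y
      = (Phi τ)⁻¹ * (Real.exp (t ⬝ᵥ ξ) * G (y - ξ)) := by
    intro y
    rw [esnPdfFull]
    simp only [← hω, ← hΩb, hG]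
    rw [show t ⬝ᵥ (y - ξ) = t ⬝ᵥ y - t ⬝ᵥ ξ from dotProduct_sub t y ξ, Real.exp_sub,
      ← ha0, div_eq_mul_inv]
    field_simp [Real.exp_ne_zero]
  have hInt : (∫ y : Fin k → ℝ, Real.exp (t ⬝ᵥ y) * esnPdfFull ξ Ω α τ y)
      = Real.exp (ξ ⬝ᵥ t + (1/2) * (t ⬝ᵥ Ω *ᵥ t)) * Phi (τ + δ ⬝ᵥ ω *ᵥ t) / Phi τ := by
    calc ∫ y : Fin k → ℝ, Real.exp (t ⬝ᵥ y) * esnPdfFull ξ Ω α τ y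
        = ∫ y : Fin k → ℝ, (Phi τ)⁻¹ * (Real.exp (t ⬝ᵥ ξ) * G (y - ξ)) :=
          integral_congr_ae (Filter.Eventually.of_forall fun y => hunfold y)
      _ = (Phi τ)⁻¹ * (Real.exp (t ⬝ᵥ ξ) * ∫ y, G (y - ξ)) := by
          rw [MeasureTheory.integral_const_mul, MeasureTheory.integral_const_mul]
      _ = (Phi τ)⁻¹ * (Real.exp (t ⬝ᵥ ξ) * ∫ z, G z) := by
          rw [integral_sub_right_eq_self G ξ]
      _ = (Phi τ)⁻¹ * (Real.exp (t ⬝ᵥ ξ) * (|C.det| * ∫ x, G (C *ᵥ x))) := by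
          rw [integral_comp_mulVec C hdetCne G,
            ← mul_assoc |C.det| |C.det|⁻¹ (∫ x, G x),
            mul_inv_cancel₀ (abs_ne_zero.2 hdetCne), one_mul]
      _ = (Phi τ)⁻¹ * (Real.exp (t ⬝ᵥ ξ) * (|C.det| *
            ∫ x, Ω.det ^ (-(1:ℝ)/2) * Real.exp ((1/2) * (s ⬝ᵥ s))
              * ((∏ i, phi ((x - s) i)) * Phi (c' + vv ⬝ᵥ (x - s))))) := by
          rw [integral_congr_ae (Filter.Eventually.of_forall fun x => hpoint x)]
      _ = (Phi τ)⁻¹ * (Real.exp (t ⬝ᵥ ξ) * (|C.det| * (Ω.det ^ (-(1:ℝ)/2)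
            * Real.exp ((1/2) * (s ⬝ᵥ s))
            * ∫ x, (∏ i, phi ((x - s) i)) * Phi (c' + vv ⬝ᵥ (x - s))))) := by
          rw [MeasureTheory.integral_const_mul]
      _ = (Phi τ)⁻¹ * (Real.exp (t ⬝ᵥ ξ) * (|C.det| * (Ω.det ^ (-(1:ℝ)/2)
            * Real.exp ((1/2) * (s ⬝ᵥ s))
            * Phi (c' / Real.sqrt (1 + vv ⬝ᵥ vv))))) := by
          rw [integral_sub_right_eq_self
            (fun u => (∏ i, phi (u i)) * Phi (c' + vv ⬝ᵥ u)) s,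
            integral_pi_phi_mul_Phi k c' vv]
      _ = Real.exp (ξ ⬝ᵥ t + (1/2) * (t ⬝ᵥ Ω *ᵥ t)) * Phi (τ + δ ⬝ᵥ ω *ᵥ t) / Phi τ := by
          rw [harg, Real.exp_add, dotProduct_comm ξ t, ← id7]
          rw [show |C.det| * (Ω.det ^ (-(1:ℝ)/2) * Real.exp ((1/2) * (s ⬝ᵥ s))
              * Phi (τ + δ ⬝ᵥ ω *ᵥ t))
            = (|C.det| * Ω.det ^ (-(1:ℝ)/2)) * (Real.exp ((1/2) * (s ⬝ᵥ s))
              * Phi (τ + δ ⬝ᵥ ω *ᵥ t)) from by ring, hconst, one_mul]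
          ring
  rw [hInt, Real.log_div (mul_pos (Real.exp_pos _) (Phi_pos _)).ne' (Phi_pos τ).ne',
    Real.log_mul (Real.exp_ne_zero _) (Phi_pos _).ne', Real.log_exp]
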